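/- arXiv:1604.00845 — 4 statements merged into one kernel-verified Lean document; each statement's English description precedes it below -/
import Mathlib

section
/- Let Σ ∈ M_{d×d} (so that Σ is invertible over ℤ/nℤ), let a, q ∈ [n]^d, and let x ∈ ℂ^{[n]^d}. Then for every i ∈ [n]^d one has F^{-1}(P_{Σ,a,q} x̂)_{π_{Σ,q}(i)} = x_i · ω^{a^T Σ i}. -/
/- STATEMENT 0: For Σ ∈ M_{d×d} (odd determinant over ℤ/nℤ), a, q ∈ [n]^d and x ∈ ℂ^{[n]^d},
   for every i one has F^{-1}(P_{Σ,a,q} x̂)_{π_{Σ,q}(i)} = x_i · ω^{aᵀΣi}. -/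

open scoped BigOperators

/-- ω^t for t ∈ ℤ/nℤ, where ω = e^{2πi/n}. -/
noncomputable def fe (n : ℕ) (t : ZMod n) : ℂ :=
  Complex.exp (2 * (Real.pi : ℂ) * Complex.I * ((t.val : ℕ) : ℂ) / (n : ℂ))

/-- dot product in (ℤ/nℤ)^d -/
def fdot {n d : ℕ} (i j : Fin d → ZMod n) : ZMod n := ∑ s, i s * j s

/-- orthonormal d-dimensional DFT: x̂_j = N^{-1/2} Σ_i ω^{-iᵀj} x_i -/
noncomputable def fdft {n d : ℕ} [NeZero n] (x : (Fin d → ZMod n) → ℂ) :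
    (Fin d → ZMod n) → ℂ :=
  fun j => ((Real.sqrt ((n : ℝ) ^ d) : ℝ) : ℂ)⁻¹ * ∑ i, fe n (-(fdot i j)) * x i

/-- inverse orthonormal d-dimensional DFT: (F⁻¹y)_j = N^{-1/2} Σ_i ω^{iᵀj} y_i -/
noncomputable def fidft {n d : ℕ} [NeZero n] (y : (Fin d → ZMod n) → ℂ) :
    (Fin d → ZMod n) → ℂ :=
  fun j => ((Real.sqrt ((n : ℝ) ^ d) : ℝ) : ℂ)⁻¹ * ∑ i, fe n (fdot i j) * y i

/-- the pseudorandom spectrum permutation π_{Σ,q}(i) = Σ(i−q) -/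
def fperm {n d : ℕ} (M : Matrix (Fin d) (Fin d) (ZMod n)) (q : Fin d → ZMod n)
    (i : Fin d → ZMod n) : Fin d → ZMod n := M.mulVec (i - q)

/-- the operator P_{Σ,a,q}: (P ŷ)_i = ŷ_{Σᵀ(i−a)} · ω^{iᵀΣq} -/
noncomputable def fP {n d : ℕ} (M : Matrix (Fin d) (Fin d) (ZMod n))
    (a q : Fin d → ZMod n) (y : (Fin d → ZMod n) → ℂ) : (Fin d → ZMod n) → ℂ :=
  fun i => y (M.transpose.mulVec (i - a)) * fe n (fdot i (M.mulVec q))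

noncomputable def zet (n : ℕ) : ℂ := Complex.exp (2 * (Real.pi : ℂ) * Complex.I / (n : ℂ))

lemma zet_pow_n {n : ℕ} [NeZero n] : zet n ^ n = 1 := by
  rw [zet, ← Complex.exp_nat_mul]
  have hn : (n : ℂ) ≠ 0 := Nat.cast_ne_zero.mpr (NeZero.ne n)
  have h : (n : ℂ) * (2 * (Real.pi : ℂ) * Complex.I / (n : ℂ)) = 2 * Real.pi * Complex.I := by
    field_simp
  rw [h, Complex.exp_two_pi_mul_I]

lemma zet_pow_mod {n : ℕ} [NeZero n] (x : ℕ) : zet n ^ (x % n) = zet n ^ x := by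
  conv_rhs => rw [← Nat.div_add_mod x n]
  rw [pow_add, pow_mul, zet_pow_n, one_pow, one_mul]

lemma fe_eq {n : ℕ} (t : ZMod n) : fe n t = zet n ^ t.val := by
  rw [fe, zet, ← Complex.exp_nat_mul]
  ring_nf

lemma fe_zero {n : ℕ} [NeZero n] : fe n 0 = 1 := by
  rw [fe_eq, ZMod.val_zero, pow_zero]

lemma fe_add {n : ℕ} [NeZero n] (s t : ZMod n) : fe n (s + t) = fe n s * fe n t := by
  rw [fe_eq, fe_eq, fe_eq, ZMod.val_add, zet_pow_mod, pow_add]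

lemma fe_sum {n : ℕ} [NeZero n] {ι : Type*} (s : Finset ι) (f : ι → ZMod n) :
    fe n (∑ t ∈ s, f t) = ∏ t ∈ s, fe n (f t) := by
  classical
  induction s using Finset.cons_induction with
  | empty => simpa using fe_zero
  | cons a s ha ih => rw [Finset.sum_cons, Finset.prod_cons, fe_add, ih]

lemma fe_mul_sum {n : ℕ} [NeZero n] (c : ZMod n) :
    ∑ j : ZMod n, fe n (j * c) = if c = 0 then (n : ℂ) else 0 := by
  by_cases hc : c = 0
  · simp [hc, fe_zero, Finset.card_univ, ZMod.card]
  · rw [if_neg hc]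
    have hz : zet n ^ c.val ≠ 1 := by
      intro h
      rw [zet, ← Complex.exp_nat_mul, Complex.exp_eq_one_iff] at h
      obtain ⟨k, hk⟩ := h
      have hn : (n : ℂ) ≠ 0 := Nat.cast_ne_zero.mpr (NeZero.ne n)
      have h2 : ((c.val : ℂ)) = k * n := by
        have hne : (2 : ℂ) * Real.pi * Complex.I ≠ 0 := by
          simp [Complex.I_ne_zero, Real.pi_ne_zero]
        field_simp at hk
        linear_combination hk
      have h3 : (c.val : ℤ) = k * n := by exact_mod_cast h2
      have h4 : (n : ℤ) ∣ (c.val : ℤ) := ⟨k, by rw [h3, mul_comm]⟩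
      have h4n : n ∣ c.val := by exact_mod_cast h4
      have h5 : c.val = 0 := Nat.eq_zero_of_dvd_of_lt h4n (ZMod.val_lt c) 

      exact hc (by rwa [← ZMod.val_eq_zero])
    have key : ∀ j : ZMod n, fe n (j * c) = (zet n ^ c.val) ^ j.val := by
      intro j
      rw [fe_eq, ZMod.val_mul, zet_pow_mod, pow_mul']
    rw [Finset.sum_congr rfl (fun j _ => key j)]
    have hbij : ∑ j : ZMod n, (zet n ^ c.val) ^ j.val
        = ∑ k ∈ Finset.range n, (zet n ^ c.val) ^ k := by
      apply Finset.sum_nbij' (i := fun (j : ZMod n) => j.val)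
        (j := fun k => (k : ZMod n)) <;> intro a ha
      · simpa using ZMod.val_lt a
      · simp
      · simp [ZMod.natCast_zmod_val]
      · simp only [Finset.mem_range] at ha
        simp [ZMod.val_cast_of_lt ha]
      · rfl
    rw [hbij, geom_sum_eq hz, ← pow_mul, mul_comm, pow_mul, zet_pow_n, one_pow,
      sub_self, zero_div]

lemma fdot_sum_eq {n d : ℕ} [NeZero n] (c : Fin d → ZMod n) :
    ∑ j : Fin d → ZMod n, fe n (fdot j c) = if c = 0 then ((n : ℂ)) ^ d else 0 := by
  have h1 : ∀ j : Fin d → ZMod n, fe n (fdot j c) = ∏ s, fe n (j s * c s) := fun j =>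
    fe_sum _ _
  rw [Finset.sum_congr rfl (fun j _ => h1 j)]
  have h2 : ∑ j : Fin d → ZMod n, ∏ s, fe n (j s * c s)
      = ∏ s, ∑ t : ZMod n, fe n (t * c s) := by
    rw [Finset.prod_univ_sum (fun _ => (Finset.univ : Finset (ZMod n)))
      (fun s t => fe n (t * c s)), Fintype.piFinset_univ]
  rw [h2]
  by_cases hc : c = 0
  · subst hc
    simp [fe_mul_sum, fe_zero]
  · rw [if_neg hc]
    obtain ⟨s, hs⟩ : ∃ s, c s ≠ 0 := by
      by_contra h
      push_neg at h
      exact hc (funext h)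
    apply Finset.prod_eq_zero (Finset.mem_univ s)
    rw [fe_mul_sum, if_neg hs]

lemma sqrt_fac {n d : ℕ} [NeZero n] :
    ((((Real.sqrt ((n : ℝ) ^ d) : ℝ)) : ℂ))⁻¹ * ((((Real.sqrt ((n : ℝ) ^ d) : ℝ)) : ℂ))⁻¹
      * ((n : ℂ)) ^ d = 1 := by
  have h0 : (0:ℝ) ≤ (n:ℝ)^d := by positivity
  have h1 : Real.sqrt ((n:ℝ)^d) * Real.sqrt ((n:ℝ)^d) = (n:ℝ)^d := Real.mul_self_sqrt h0
  have h2 : ((n:ℂ))^d = ((((n:ℝ)^d : ℝ)) : ℂ) := by push_cast; ring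
  rw [← mul_inv, h2,
    show ((Real.sqrt ((n:ℝ)^d) : ℂ)) * ((Real.sqrt ((n:ℝ)^d) : ℂ)) = (((n:ℝ)^d : ℝ) : ℂ) by
      exact_mod_cast congrArg Complex.ofReal h1]
  apply inv_mul_cancel₀
  have hn0 : (0:ℝ) < (n:ℝ) := by exact_mod_cast Nat.pos_of_ne_zero (NeZero.ne n)
  have : ((n:ℝ)^d) ≠ 0 := by positivity
  exact_mod_cast Complex.ofReal_ne_zero.mpr this

lemma fidft_fdft {n d : ℕ} [NeZero n] (x : (Fin d → ZMod n) → ℂ) (i : Fin d → ZMod n) :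
    fidft (fdft x) i = x i := by
  set C : ℂ := ((((Real.sqrt ((n : ℝ) ^ d) : ℝ)) : ℂ))⁻¹ with hC
  have hdot : ∀ j k : Fin d → ZMod n, fdot j i + -(fdot k j) = fdot j (i - k) := by
    intro j k
    simp only [fdot, Pi.sub_apply, mul_sub, Finset.sum_sub_distrib, ← sub_eq_add_neg]
    congr 1
    exact Finset.sum_congr rfl fun s _ => mul_comm _ _
  have key : ∑ j : Fin d → ZMod n, fe n (fdot j i) * (C * ∑ k, fe n (-(fdot k j)) * x k)
      = C * ((n : ℂ)^d * x i) := by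
    calc ∑ j : Fin d → ZMod n, fe n (fdot j i) * (C * ∑ k, fe n (-(fdot k j)) * x k)
        = ∑ j : Fin d → ZMod n, C * ∑ k, fe n (fdot j (i - k)) * x k := by
          apply Finset.sum_congr rfl
          intro j _
          rw [Finset.mul_sum, Finset.mul_sum, Finset.mul_sum]
          apply Finset.sum_congr rfl
          intro k _
          rw [← hdot j k, fe_add]
          ring
      _ = C * ∑ j : Fin d → ZMod n, ∑ k, fe n (fdot j (i - k)) * x k := by
          rw [Finset.mul_sum]
      _ = C * ∑ k : Fin d → ZMod n, (∑ j : Fin d → ZMod n, fe n (fdot j (i - k))) * x k := by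
          rw [Finset.sum_comm]
          congr 1
          exact Finset.sum_congr rfl fun k _ => (Finset.sum_mul _ _ _).symm
      _ = C * ((n : ℂ)^d * x i) := by
          congr 1
          rw [Finset.sum_congr rfl (fun k _ => by rw [fdot_sum_eq])]
          rw [Finset.sum_eq_single i]
          · simp
          · intro k _ hk
            rw [if_neg, zero_mul]
            rw [sub_eq_zero]
            exact fun h => hk h.symm
          · intro h
            exact absurd (Finset.mem_univ i) h
  unfold fidft fdft
  rw [← hC]
  rw [key]
  have := sqrt_fac (n := n) (d := d)
  rw [← hC] at this
  calc C * (C * ((n:ℂ)^d * x i)) = (C * C * (n:ℂ)^d) * x i := by ring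
    _ = x i := by rw [this, one_mul]

theorem stmt0 {n d m : ℕ} [NeZero n] (hn : n = 2 ^ m) (hd : 1 ≤ d)
    (M : Matrix (Fin d) (Fin d) (ZMod n)) (hM : Odd (Matrix.det M).val)
    (a q : Fin d → ZMod n) (x : (Fin d → ZMod n) → ℂ) (i : Fin d → ZMod n) :
    fidft (fP M a q (fdft x)) (fperm M q i) = x i * fe n (fdot a (M.mulVec i)) := by
  -- invertibility of M
  have hdet : IsUnit M.det := by
    have h1 : IsUnit (((M.det.val : ℕ) : ZMod n)) := by
      rw [ZMod.isUnit_iff_coprime]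
      have h2 : Nat.Coprime M.det.val (2 ^ m) :=
        Nat.Coprime.pow_right m hM.coprime_two_right
      rwa [← hn] at h2
    rwa [ZMod.natCast_zmod_val] at h1
  haveI : Invertible M := M.invertibleOfIsUnitDet hdet
  haveI : Invertible M.transpose := Matrix.invertibleTranspose M
  -- bijectivity of j ↦ M.transpose(j - a)
  have hψ : Function.Bijective (fun j : Fin d → ZMod n => M.transpose.mulVec (j - a)) := by
    rw [Function.bijective_iff_has_inverse]
    refine ⟨fun y => (⅟(M.transpose)).mulVec y + a, fun j => ?_, fun y => ?_⟩
    · simp only [Matrix.mulVec_mulVec, invOf_mul_self, Matrix.one_mulVec,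
        sub_add_cancel]
    · simp only [add_sub_cancel_right, Matrix.mulVec_mulVec, mul_invOf_self,
        Matrix.one_mulVec]
  -- dot product identities (fdot = dotProduct)
  have hfd : ∀ (u v : Fin d → ZMod n), fdot u v = dotProduct u v := fun _ _ => rfl
  have hterm : ∀ j : Fin d → ZMod n,
      fe n (fdot j (M.mulVec (i - q))) * (fdft x (M.transpose.mulVec (j - a)) * fe n (fdot j (M.mulVec q)))
      = fe n (fdot a (M.mulVec i)) *
          (fe n (fdot (M.transpose.mulVec (j - a)) i) * fdft x (M.transpose.mulVec (j - a))) := by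
    intro j
    have h1 : fdot j (M.mulVec (i - q)) + fdot j (M.mulVec q) = fdot j (M.mulVec i) := by
      simp only [hfd]
      rw [← dotProduct_add, ← Matrix.mulVec_add, sub_add_cancel]
    have h2 : fdot j (M.mulVec i) = fdot (M.transpose.mulVec (j - a)) i + fdot a (M.mulVec i) := by
      simp only [hfd]
      rw [Matrix.dotProduct_mulVec j M i, ← Matrix.mulVec_transpose]
      have h3 : M.transpose.mulVec j = M.transpose.mulVec (j - a) + M.transpose.mulVec a := by
        rw [← Matrix.mulVec_add, sub_add_cancel]
      rw [h3, add_dotProduct]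
      congr 1
      rw [Matrix.mulVec_transpose, ← Matrix.dotProduct_mulVec]
    have h4 : fe n (fdot j (M.mulVec (i - q))) * fe n (fdot j (M.mulVec q))
        = fe n (fdot a (M.mulVec i)) * fe n (fdot (M.transpose.mulVec (j - a)) i) := by
      rw [← fe_add, h1, h2, fe_add, mul_comm]
    calc fe n (fdot j (M.mulVec (i - q))) * (fdft x (M.transpose.mulVec (j - a)) * fe n (fdot j (M.mulVec q)))
        = fe n (fdot j (M.mulVec (i - q))) * fe n (fdot j (M.mulVec q)) * fdft x (M.transpose.mulVec (j - a)) := by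
          ring
      _ = _ := by rw [h4]; ring
  have hsum : ∑ j : Fin d → ZMod n, fe n (fdot (M.transpose.mulVec (j - a)) i) * fdft x (M.transpose.mulVec (j - a))
      = ∑ y : Fin d → ZMod n, fe n (fdot y i) * fdft x y :=
    Function.Bijective.sum_comp hψ (fun y => fe n (fdot y i) * fdft x y)
  have goal_eq : fidft (fP M a q (fdft x)) (fperm M q i)
      = ((Real.sqrt ((n : ℝ) ^ d) : ℝ) : ℂ)⁻¹ *
        ∑ j, fe n (fdot j (M.mulVec (i - q))) *
          (fdft x (M.transpose.mulVec (j - a)) * fe n (fdot j (M.mulVec q))) := rfl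
  rw [goal_eq]
  calc ((Real.sqrt ((n : ℝ) ^ d) : ℝ) : ℂ)⁻¹ *
      ∑ j, fe n (fdot j (M.mulVec (i - q))) * (fdft x (M.transpose.mulVec (j - a)) * fe n (fdot j (M.mulVec q)))
      = ((Real.sqrt ((n : ℝ) ^ d) : ℝ) : ℂ)⁻¹ * ∑ j, fe n (fdot a (M.mulVec i)) *
          (fe n (fdot (M.transpose.mulVec (j - a)) i) * fdft x (M.transpose.mulVec (j - a))) := by
        rw [Finset.sum_congr rfl (fun j _ => hterm j)]
    _ = fe n (fdot a (M.mulVec i)) * (((Real.sqrt ((n : ℝ) ^ d) : ℝ) : ℂ)⁻¹ *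
          ∑ y, fe n (fdot y i) * fdft x y) := by
        rw [← Finset.mul_sum, hsum]; ring
    _ = fe n (fdot a (M.mulVec i)) * x i := by
        rw [show (((Real.sqrt ((n : ℝ) ^ d) : ℝ) : ℂ)⁻¹ *
          ∑ y, fe n (fdot y i) * fdft x y) = fidft (fdft x) i from rfl, fidft_fdft]
    _ = x i * fe n (fdot a (M.mulVec i)) := mul_comm _ _
end

section
/- Let x, z ∈ ℂ^n and let k ≤ n be a positive integer. Let S be a set of k coordinates of x of largest magnitude, and let T be a set of 2k coordinates of z of largest magnitude. Then ||x − z_T||_2² ≤ ||x − x_S||_2² + 4·||(x − z)_{S∪T}||_2². -/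
/- STATEMENT 12: Let x, z ∈ ℂ^n and k ≤ n. Let S contain the k largest-magnitude coordinates
   of x, and T the 2k largest-magnitude coordinates of z. Then
   ‖x − z_T‖₂² ≤ ‖x − x_S‖₂² + 4‖(x − z)_{S∪T}‖₂². -/

open scoped BigOperators
open Finset

/-- Cauchy–Schwarz style bound: if `0 ≤ u i`, `0 ≤ v i` and `h i ≤ u i + v i` with `0 ≤ h i`,
then `∑ h² ≤ (√(∑u²) + √(∑v²))²`. -/
lemma sum_sq_le_sq_sqrt_add_sqrt {ι : Type*} (s : Finset ι) (h u v : ι → ℝ)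
    (hu : ∀ i ∈ s, 0 ≤ u i) (hv : ∀ i ∈ s, 0 ≤ v i)
    (hh : ∀ i ∈ s, 0 ≤ h i) (hle : ∀ i ∈ s, h i ≤ u i + v i) :
    ∑ i ∈ s, h i ^ 2 ≤
      (Real.sqrt (∑ i ∈ s, u i ^ 2) + Real.sqrt (∑ i ∈ s, v i ^ 2)) ^ 2 := by
  have hU : (0:ℝ) ≤ ∑ i ∈ s, u i ^ 2 := Finset.sum_nonneg fun i _ => sq_nonneg _
  have hV : (0:ℝ) ≤ ∑ i ∈ s, v i ^ 2 := Finset.sum_nonneg fun i _ => sq_nonneg _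
  have hcs : ∑ i ∈ s, u i * v i ≤
      Real.sqrt (∑ i ∈ s, u i ^ 2) * Real.sqrt (∑ i ∈ s, v i ^ 2) := by
    have h1 : (∑ i ∈ s, u i * v i) ^ 2 ≤ (∑ i ∈ s, u i ^ 2) * ∑ i ∈ s, v i ^ 2 :=
      Finset.sum_mul_sq_le_sq_mul_sq s u v
    have h2 : (0:ℝ) ≤ ∑ i ∈ s, u i * v i :=
      Finset.sum_nonneg fun i hi => mul_nonneg (hu i hi) (hv i hi)
    calc ∑ i ∈ s, u i * v i = Real.sqrt ((∑ i ∈ s, u i * v i) ^ 2) := by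
            rw [Real.sqrt_sq h2]
      _ ≤ Real.sqrt ((∑ i ∈ s, u i ^ 2) * ∑ i ∈ s, v i ^ 2) := Real.sqrt_le_sqrt h1
      _ = _ := Real.sqrt_mul hU _
  have hterm : ∀ i ∈ s, h i ^ 2 ≤ u i ^ 2 + 2 * (u i * v i) + v i ^ 2 := by
    intro i hi
    have := hle i hi
    nlinarith [hh i hi, hu i hi, hv i hi]
  calc ∑ i ∈ s, h i ^ 2
      ≤ ∑ i ∈ s, (u i ^ 2 + 2 * (u i * v i) + v i ^ 2) := Finset.sum_le_sum hterm
    _ = (∑ i ∈ s, u i ^ 2) + 2 * (∑ i ∈ s, u i * v i) + ∑ i ∈ s, v i ^ 2 := by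
        rw [Finset.sum_add_distrib, Finset.sum_add_distrib, Finset.mul_sum]
    _ ≤ (∑ i ∈ s, u i ^ 2) + 2 * (Real.sqrt (∑ i ∈ s, u i ^ 2) *
          Real.sqrt (∑ i ∈ s, v i ^ 2)) + ∑ i ∈ s, v i ^ 2 := by linarith
    _ = _ := by
        rw [add_sq]
        rw [Real.sq_sqrt hU, Real.sq_sqrt hV]; ring

theorem stmt12 {n k : ℕ} (hk : 1 ≤ k) (hkn : k ≤ n)
    (x z : Fin n → ℂ) (S T : Finset (Fin n))
    (hS : S.card = k)
    (hSmax : ∀ i ∈ S, ∀ j ∉ S, ‖x j‖ ≤ ‖x i‖)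
    (hT : T.card = 2 * k)
    (hTmax : ∀ i ∈ T, ∀ j ∉ T, ‖z j‖ ≤ ‖z i‖) :
    ∑ i, ‖x i - (if i ∈ T then z i else 0)‖ ^ 2
      ≤ ∑ i, ‖x i - (if i ∈ S then x i else 0)‖ ^ 2
        + 4 * ∑ i ∈ S ∪ T, ‖x i - z i‖ ^ 2 := by
  classical
  set a : Fin n → ℝ := fun i => ‖x i - z i‖ with ha
  set g : Fin n → ℝ := fun i => ‖x i‖ with hg
  set w : Fin n → ℝ := fun i => ‖z i‖ with hw
  -- rewrite LHS
  have hL : ∑ i, ‖x i - (if i ∈ T then z i else 0)‖ ^ 2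
      = ∑ i ∈ T, a i ^ 2 + ∑ i ∈ Tᶜ, g i ^ 2 := by
    rw [← Finset.sum_add_sum_compl T]
    congr 1
    · exact Finset.sum_congr rfl fun i hi => by simp [hi, a]
    · refine Finset.sum_congr rfl fun i hi => ?_
      have : i ∉ T := by simpa using hi
      simp [this, g]
  -- rewrite middle sum
  have hM : ∑ i, ‖x i - (if i ∈ S then x i else 0)‖ ^ 2
      = ∑ i ∈ Sᶜ, g i ^ 2 := by
    rw [← Finset.sum_add_sum_compl S]
    have h1 : ∑ i ∈ S, ‖x i - (if i ∈ S then x i else 0)‖ ^ 2 = 0 := by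
      refine Finset.sum_eq_zero fun i hi => by simp [hi]
    rw [h1, zero_add]
    refine Finset.sum_congr rfl fun i hi => ?_
    have : i ∉ S := by simpa using hi
    simp [this, g]
  rw [hL, hM]
  -- decompose complements
  have hTc : Tᶜ = (S \ T) ∪ (S ∪ T)ᶜ := by
    ext i; simp [Finset.mem_compl, Finset.mem_sdiff, Finset.mem_union]; tauto
  have hSc : Sᶜ = (T \ S) ∪ (S ∪ T)ᶜ := by
    ext i; simp [Finset.mem_compl, Finset.mem_sdiff, Finset.mem_union]; tauto
  have hdT : Disjoint (S \ T) ((S ∪ T)ᶜ) := by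
    rw [Finset.disjoint_left]; intro i hi hic
    simp only [Finset.mem_sdiff] at hi
    simp only [Finset.mem_compl, Finset.mem_union] at hic
    exact hic (Or.inl hi.1)
  have hdS : Disjoint (T \ S) ((S ∪ T)ᶜ) := by
    rw [Finset.disjoint_left]; intro i hi hic
    simp only [Finset.mem_sdiff] at hi
    simp only [Finset.mem_compl, Finset.mem_union] at hic
    exact hic (Or.inr hi.1)
  have hUT : S ∪ T = T ∪ (S \ T) := by
    ext i; simp [Finset.mem_union, Finset.mem_sdiff]; tauto
  have hdUT : Disjoint T (S \ T) := by
    rw [Finset.disjoint_left]; intro i hi hic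
    exact (Finset.mem_sdiff.1 hic).2 hi
  have h4 : ∑ i ∈ S ∪ T, ‖x i - z i‖ ^ 2
      = ∑ i ∈ T, a i ^ 2 + ∑ i ∈ S \ T, a i ^ 2 := by
    rw [hUT, Finset.sum_union hdUT]
  rw [hTc, hSc, h4, Finset.sum_union hdT, Finset.sum_union hdS]
  -- reduce to the key inequality over S' = S \ T and T' = T \ S
  have hTS_sub : ∑ i ∈ T \ S, a i ^ 2 ≤ ∑ i ∈ T, a i ^ 2 :=
    Finset.sum_le_sum_of_subset_of_nonneg (Finset.sdiff_subset)
      (fun i _ _ => sq_nonneg _)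
  have key : ∑ i ∈ S \ T, g i ^ 2
      ≤ ∑ i ∈ T \ S, g i ^ 2 + 3 * ∑ i ∈ T \ S, a i ^ 2 + 4 * ∑ i ∈ S \ T, a i ^ 2 := by
    set S' := S \ T with hS'
    set T' := T \ S with hT'
    -- cardinality fact : 2 * S'.card ≤ T'.card
    have hcard : 2 * S'.card ≤ T'.card := by
      have h1 : (S ∩ T).card + (S \ T).card = S.card := Finset.card_inter_add_card_sdiff S T
      have h2 : (T ∩ S).card + (T \ S).card = T.card := Finset.card_inter_add_card_sdiff T S
      have h3 : (S ∩ T).card = (T ∩ S).card := by rw [Finset.inter_comm]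
      have h4 : (S ∩ T).card ≤ S.card := Finset.card_le_card (Finset.inter_subset_left)
      simp only [hS', hT']
      omega
    -- pointwise : w i ≤ w j for i ∈ S', j ∈ T'
    have hww : ∀ i ∈ S', ∀ j ∈ T', w i ≤ w j := by
      intro i hi j hj
      have hiT : i ∉ T := (Finset.mem_sdiff.1 hi).2
      have hjT : j ∈ T := (Finset.mem_sdiff.1 hj).1
      exact hTmax j hjT i hiT
    -- 2 * ∑_{S'} w² ≤ ∑_{T'} w²
    have hZ2 : 2 * ∑ i ∈ S', w i ^ 2 ≤ ∑ j ∈ T', w j ^ 2 := by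
      have hnonneg : (0:ℝ) ≤ ∑ i ∈ S', w i ^ 2 :=
        Finset.sum_nonneg fun i _ => sq_nonneg _
      have step : (T'.card : ℝ) * ∑ i ∈ S', w i ^ 2 ≤
          (S'.card : ℝ) * ∑ j ∈ T', w j ^ 2 := by
        have : ∀ i ∈ S', (T'.card : ℝ) * w i ^ 2 ≤ ∑ j ∈ T', w j ^ 2 := by
          intro i hi
          have : ∑ j ∈ T', w i ^ 2 ≤ ∑ j ∈ T', w j ^ 2 := by
            refine Finset.sum_le_sum fun j hj => ?_
            have := hww i hi j hj
            have hwi : 0 ≤ w i := norm_nonneg _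
            nlinarith
          simpa [Finset.sum_const, nsmul_eq_mul] using this
        calc (T'.card : ℝ) * ∑ i ∈ S', w i ^ 2
            = ∑ i ∈ S', (T'.card : ℝ) * w i ^ 2 := by rw [Finset.mul_sum]
          _ ≤ ∑ i ∈ S', ∑ j ∈ T', w j ^ 2 := Finset.sum_le_sum this
          _ = (S'.card : ℝ) * ∑ j ∈ T', w j ^ 2 := by
              rw [Finset.sum_const, nsmul_eq_mul]
      rcases Nat.eq_zero_or_pos S'.card with h0 | hpos
      · have : S' = ∅ := Finset.card_eq_zero.1 h0
        simp [this]
        exact Finset.sum_nonneg fun j _ => sq_nonneg _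
      · have hcast : (2:ℝ) * S'.card ≤ T'.card := by exact_mod_cast hcard
        have h5 : (S'.card : ℝ) * (2 * ∑ i ∈ S', w i ^ 2)
            ≤ (S'.card : ℝ) * ∑ j ∈ T', w j ^ 2 := by
          calc (S'.card : ℝ) * (2 * ∑ i ∈ S', w i ^ 2)
              = ((2:ℝ) * S'.card) * ∑ i ∈ S', w i ^ 2 := by ring
            _ ≤ (T'.card : ℝ) * ∑ i ∈ S', w i ^ 2 :=
                mul_le_mul_of_nonneg_right hcast hnonneg
            _ ≤ _ := step
        have hposR : (0:ℝ) < S'.card := by exact_mod_cast hpos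
        exact le_of_mul_le_mul_left h5 hposR
    -- Cauchy–Schwarz bounds
    set sA := Real.sqrt (∑ i ∈ S', a i ^ 2) with hsA
    set sZ := Real.sqrt (∑ i ∈ S', w i ^ 2) with hsZ
    set sB := Real.sqrt (∑ j ∈ T', a j ^ 2) with hsB
    set sX := Real.sqrt (∑ j ∈ T', g j ^ 2) with hsX
    have hP : ∑ i ∈ S', g i ^ 2 ≤ (sA + sZ) ^ 2 := by
      refine sum_sq_le_sq_sqrt_add_sqrt S' g a w
        (fun i _ => norm_nonneg _) (fun i _ => norm_nonneg _)
        (fun i _ => norm_nonneg _) (fun i _ => ?_)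
      have : x i = (x i - z i) + z i := by ring
      calc g i = ‖(x i - z i) + z i‖ := by rw [← this]
        _ ≤ a i + w i := norm_add_le _ _
    have hW : ∑ j ∈ T', w j ^ 2 ≤ (sB + sX) ^ 2 := by
      refine sum_sq_le_sq_sqrt_add_sqrt T' w a g
        (fun i _ => norm_nonneg _) (fun i _ => norm_nonneg _)
        (fun i _ => norm_nonneg _) (fun j _ => ?_)
      have hzj : z j = x j - (x j - z j) := by ring
      calc w j = ‖x j - (x j - z j)‖ := by rw [← hzj]
        _ ≤ ‖x j‖ + ‖x j - z j‖ := by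
            rw [sub_eq_add_neg]
            refine (norm_add_le _ _).trans ?_
            rw [norm_neg]
        _ = a j + g j := by ring
    have hAq : sA ^ 2 = ∑ i ∈ S', a i ^ 2 :=
      Real.sq_sqrt (Finset.sum_nonneg fun i _ => sq_nonneg _)
    have hZq : sZ ^ 2 = ∑ i ∈ S', w i ^ 2 :=
      Real.sq_sqrt (Finset.sum_nonneg fun i _ => sq_nonneg _)
    have hBq : sB ^ 2 = ∑ j ∈ T', a j ^ 2 :=
      Real.sq_sqrt (Finset.sum_nonneg fun i _ => sq_nonneg _)
    have hXq : sX ^ 2 = ∑ j ∈ T', g j ^ 2 :=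
      Real.sq_sqrt (Finset.sum_nonneg fun i _ => sq_nonneg _)
    have hsAnn : 0 ≤ sA := Real.sqrt_nonneg _
    have hsZnn : 0 ≤ sZ := Real.sqrt_nonneg _
    have hsBnn : 0 ≤ sB := Real.sqrt_nonneg _
    have hsXnn : 0 ≤ sX := Real.sqrt_nonneg _
    rw [← hXq, ← hBq, ← hAq]
    have hZ2' : 2 * sZ ^ 2 ≤ (sB + sX) ^ 2 := by
      rw [hZq]; exact le_trans hZ2 hW
    nlinarith [sq_nonneg (3 * sA - sZ), sq_nonneg (2 * sB - sX), sq_nonneg sB,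
      mul_nonneg hsAnn hsZnn, mul_nonneg hsBnn hsXnn, hP, hZ2',
      hsAnn, hsZnn, hsBnn, hsXnn]
  linarith
end

section
/- There is an absolute constant c > 0 such that the following holds. Let X₁,…,X_n ≥ 0 be independent real random variables with E[X_i] ≤ μ for every i, where μ > 0, let γ ∈ (0,1), and let Y := quant^γ(X₁,…,X_n). Then Pr[ Y ≥ 4μ/γ ] ≤ 2^{−c·γ·n}. -/
/- STATEMENT 14: There is an absolute constant c > 0 such that: if X₁,…,X_n ≥ 0 are
   independent real random variables with E[X_i] ≤ μ for every i (μ > 0), γ ∈ (0,1), and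
   Y := quant^γ(X₁,…,X_n) (the ⌈γn⌉-th largest), then Pr[Y ≥ 4μ/γ] ≤ 2^{−c·γ·n}. -/

open MeasureTheory ProbabilityTheory

/-- the k-th largest element (1-indexed) of the values u₀,…,u_{m−1} -/
noncomputable def kthLargest {m : ℕ} (u : Fin m → ℝ) (k : ℕ) : ℝ :=
  ((List.ofFn u).insertionSort (· ≤ ·)).getD (m - k) 0

/-- quant^f(u₁,…,u_m): the ⌈f·m⌉-th largest of the values -/
noncomputable def quant {m : ℕ} (f : ℝ) (u : Fin m → ℝ) : ℝ :=
  kthLargest u ⌈f * m⌉₊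

/-- If the k-th largest value is at least t, then at least k values are at least t. -/
lemma card_ge_of_kthLargest {n : ℕ} (u : Fin n → ℝ) (t : ℝ) (k : ℕ) (hk1 : 1 ≤ k)
    (hkn : k ≤ n) (h : t ≤ kthLargest u k) :
    k ≤ (Finset.univ.filter (fun i => t ≤ u i)).card := by
  classical
  set l := (List.ofFn u).insertionSort (· ≤ ·) with hl
  have hlen : l.length = n := by simp [hl]
  have hsorted : List.Pairwise (· ≤ ·) l := List.pairwise_insertionSort _ _
  have hperm : l.Perm (List.ofFn u) := List.perm_insertionSort _ _
  set p : ℝ → Bool := fun x => decide (t ≤ x) with hp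
  have hcard : (Finset.univ.filter (fun i => t ≤ u i)).card = (List.ofFn u).countP p := by
    rw [List.ofFn_eq_map, List.countP_map, List.countP_eq_length_filter]
    rw [Fin.univ_def]
    simp [Finset.filter, Finset.card, Multiset.filter_coe, Function.comp]
    rfl
  rw [hcard, ← hperm.countP_eq]
  set m := n - k with hm
  have hmk : m + k = n := by omega
  have hmlt : m < l.length := by omega
  have hgetD : l.getD m 0 = l.get ⟨m, hmlt⟩ := by simp [List.getD_eq_getElem?_getD, List.getElem?_eq_getElem hmlt]
  have ht : t ≤ l.get ⟨m, hmlt⟩ := by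
    rw [← hgetD]; exact h
  have hdropall : ∀ x ∈ l.drop m, p x := by
    intro x hx
    obtain ⟨j, hj⟩ := List.get_of_mem hx
    have : (l.drop m).get j = l.get ⟨m + j, by have := j.2; simp at this; omega⟩ := by
      simp [List.getElem_drop]
    have hle : l.get ⟨m, hmlt⟩ ≤ x := by
      rw [← hj, this]
      exact hsorted.rel_get_of_le (by simp [Fin.le_def])
    simp [hp]
    exact le_trans ht hle
  have hdroplen : (l.drop m).length = k := by simp [hlen]; omega
  calc k = (l.drop m).countP p := by
          rw [List.countP_eq_length.2 hdropall, hdroplen]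
       _ ≤ l.countP p := by
          conv_rhs => rw [← List.take_append_drop m l]
          rw [List.countP_append]; omega

/-- The binomial tail estimate: `C(n,k) (γ/4)^k ≤ (e/4)^k ≤ 2^{-cγn}` for `k ≥ γn`. -/
lemma tail_bound (n k : ℕ) (γ : ℝ) (hγ0 : 0 < γ) (hγ1 : γ < 1) (hγn : γ * n ≤ k) :
    (n.choose k : ℝ) * (γ/4)^k ≤ 2 ^ (-((2 - 1/Real.log 2) * γ * n)) := by
  set c : ℝ := 2 - 1/Real.log 2 with hc
  have hlog : (0.6931471803 : ℝ) < Real.log 2 := Real.log_two_gt_d9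
  have hlogpos : 0 < Real.log 2 := by linarith
  have hfac : (k:ℝ)^k / k.factorial ≤ Real.exp k := by
    have h1 := Real.sum_le_exp_of_nonneg (x := (k:ℝ)) (by positivity) (k+1)
    have h2 : (k:ℝ)^k / k.factorial ≤ ∑ i ∈ Finset.range (k+1), (k:ℝ)^i / i.factorial :=
      Finset.single_le_sum (f := fun i => (k:ℝ)^i / i.factorial)
        (fun i _ => by positivity) (Finset.self_mem_range_succ k)
    linarith
  have hchoose : (n.choose k : ℝ) ≤ (n:ℝ)^k / k.factorial := Nat.choose_le_pow_div k n
  have hfacpos : (0:ℝ) < k.factorial := by positivity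
  have hexp1k : Real.exp (k:ℝ) = Real.exp 1 ^ k := by
    rw [← Real.exp_nat_mul]; norm_num
  have hexp : Real.exp ((k:ℝ) * (1 - 2 * Real.log 2)) ≤ 2 ^ (-(c * γ * n)) := by
    rw [Real.rpow_def_of_pos two_pos]
    apply Real.exp_le_exp.2
    have h1 : Real.log 2 * -(c * γ * ↑n) = (γ * n) * (1 - 2 * Real.log 2) := by
      rw [hc]; field_simp; ring
    rw [h1]
    exact mul_le_mul_of_nonpos_right hγn (by linarith)
  calc (n.choose k : ℝ) * (γ/4)^k
      ≤ ((n:ℝ)^k / k.factorial) * (γ/4)^k := by gcongr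
    _ = ((n:ℝ)*γ/4)^k / k.factorial := by
        rw [div_mul_eq_mul_div, ← mul_pow]; ring_nf
    _ ≤ ((k:ℝ)/4)^k / k.factorial := by
        refine (div_le_div_iff_of_pos_right hfacpos).2 (pow_le_pow_left₀ (by positivity) ?_ k)
        rw [mul_comm (n:ℝ) γ]; linarith
    _ = ((k:ℝ)^k / k.factorial) * (1/4)^k := by
        rw [div_pow, one_div, inv_pow, div_mul_eq_mul_div, div_div]; ring_nf
    _ ≤ Real.exp k * (1/4)^k := by gcongr
    _ = (Real.exp 1 / 4)^k := by rw [hexp1k, ← mul_pow, mul_one_div]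
    _ = Real.exp ((k:ℝ) * (1 - 2 * Real.log 2)) := by
        have h4 : Real.exp (2 * Real.log 2) = 4 := by
          rw [two_mul, Real.exp_add, Real.exp_log two_pos]; norm_num
        rw [Real.exp_nat_mul, Real.exp_sub, h4]
    _ ≤ 2 ^ (-(c * γ * n)) := hexp

theorem stmt14 :
    ∃ c : ℝ, 0 < c ∧
      ∀ (Ω : Type) [MeasurableSpace Ω] (P : Measure Ω) [IsProbabilityMeasure P]
        (n : ℕ) (X : Fin n → Ω → ℝ) (μ γ : ℝ),
        0 < μ → γ ∈ Set.Ioo (0 : ℝ) 1 →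
        (∀ i, Measurable (X i)) →
        (∀ i ω, 0 ≤ X i ω) →
        iIndepFun X P →
        (∀ i, Integrable (X i) P) →
        (∀ i, ∫ ω, X i ω ∂P ≤ μ) →
        (P {ω | 4 * μ / γ ≤ quant γ (fun i => X i ω)}).toReal
          ≤ 2 ^ (-(c * γ * n)) := by
  classical
  have hlog : (0.6931471803 : ℝ) < Real.log 2 := Real.log_two_gt_d9
  have hlogpos : 0 < Real.log 2 := by linarith
  refine ⟨2 - 1/Real.log 2, by rw [sub_pos, div_lt_iff₀ hlogpos]; linarith, ?_⟩
  set c : ℝ := 2 - 1/Real.log 2 with hc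
  intro Ω _ P _ n X μ γ hμ hγ hmeas hpos hInd hint hEX
  obtain ⟨hγ0, hγ1⟩ := hγ
  set t : ℝ := 4 * μ / γ with hts
  have ht : 0 < t := by positivity
  set E := {ω | t ≤ quant γ (fun i => X i ω)} with hE
  rcases Nat.eq_zero_or_pos n with hn | hn
  · subst hn
    have h1 : (P E).toReal ≤ 1 := by
      have := ENNReal.toReal_mono (by simp) (prob_le_one (μ := P) (s := E))
      simpa using this
    have h2 : (2:ℝ) ^ (-(c * γ * (0:ℕ))) = 1 := by
      norm_num
    rw [h2]; exact h1
  -- main case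
  set k := ⌈γ * n⌉₊ with hk
  have hγnpos : 0 < γ * n := by positivity
  have hk1 : 1 ≤ k := Nat.one_le_iff_ne_zero.2 (by
    simp [hk, Nat.ceil_eq_zero, not_le, hγnpos])
  have hn1 : (1:ℝ) ≤ n := by exact_mod_cast hn
  have hkn : k ≤ n := Nat.ceil_le.2 (by nlinarith)
  have hγn : γ * n ≤ k := Nat.le_ceil _
  -- Markov's inequality
  have hmark : ∀ i, P (X i ⁻¹' Set.Ici t) ≤ ENNReal.ofReal (γ/4) := by
    intro i
    have h1 := mul_meas_ge_le_integral_of_nonneg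
      (Filter.Eventually.of_forall (hpos i)) (hint i) t (μ := P)
    have h2 : t * (P {ω | t ≤ X i ω}).toReal ≤ μ := le_trans h1 (hEX i)
    have h3 : (P {ω | t ≤ X i ω}).toReal ≤ γ/4 := by
      rw [← le_div_iff₀' ht] at h2
      have h4 : μ / t = γ/4 := by rw [hts]; field_simp
      linarith
    have h5 : X i ⁻¹' Set.Ici t = {ω | t ≤ X i ω} := rfl
    rw [h5]
    calc P {ω | t ≤ X i ω}
        = ENNReal.ofReal ((P {ω | t ≤ X i ω}).toReal) :=
          (ENNReal.ofReal_toReal (measure_ne_top P _)).symm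
      _ ≤ ENNReal.ofReal (γ/4) := ENNReal.ofReal_le_ofReal h3
  -- inclusion into a union over k-element index sets
  set A := Finset.powersetCard k (Finset.univ : Finset (Fin n)) with hA
  have hsub : E ⊆ ⋃ S ∈ A, ⋂ i ∈ S, X i ⁻¹' Set.Ici t := by
    intro ω hω
    have hcard : k ≤ (Finset.univ.filter (fun i => t ≤ X i ω)).card :=
      card_ge_of_kthLargest (fun i => X i ω) t k hk1 hkn hω
    obtain ⟨S, hSsub, hScard⟩ := Finset.exists_subset_card_eq hcard
    refine Set.mem_biUnion (Finset.mem_powersetCard.2 ⟨Finset.subset_univ _, hScard⟩) ?_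
    exact Set.mem_iInter₂.2 fun i hi => (Finset.mem_filter.1 (hSsub hi)).2
  -- union bound + independence
  have hbound : P E ≤ (n.choose k : ENNReal) * ENNReal.ofReal (γ/4) ^ k := by
    calc P E ≤ P (⋃ S ∈ A, ⋂ i ∈ S, X i ⁻¹' Set.Ici t) := measure_mono hsub
      _ ≤ ∑ S ∈ A, P (⋂ i ∈ S, X i ⁻¹' Set.Ici t) := measure_biUnion_finset_le _ _
      _ = ∑ S ∈ A, ∏ i ∈ S, P (X i ⁻¹' Set.Ici t) :=
          Finset.sum_congr rfl fun S _ =>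
            hInd.meas_biInter fun i _ => ⟨Set.Ici t, measurableSet_Ici, rfl⟩
      _ ≤ ∑ S ∈ A, ∏ _i ∈ S, ENNReal.ofReal (γ/4) :=
          Finset.sum_le_sum fun S _ => Finset.prod_le_prod' fun i _ => hmark i
      _ = ∑ S ∈ A, ENNReal.ofReal (γ/4) ^ k := by
          refine Finset.sum_congr rfl fun S hS => ?_
          rw [Finset.prod_const, (Finset.mem_powersetCard.1 hS).2]
      _ = (n.choose k : ENNReal) * ENNReal.ofReal (γ/4) ^ k := by
          rw [Finset.sum_const, hA, Finset.card_powersetCard, Finset.card_univ,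
            Fintype.card_fin, nsmul_eq_mul]
  have hne : ((n.choose k : ENNReal) * ENNReal.ofReal (γ/4) ^ k) ≠ ⊤ :=
    ENNReal.mul_ne_top (ENNReal.natCast_ne_top _) (ENNReal.pow_ne_top ENNReal.ofReal_ne_top)
  have h6 : (P E).toReal ≤ (n.choose k : ℝ) * (γ/4)^k := by
    have := ENNReal.toReal_mono hne hbound
    rwa [ENNReal.toReal_mul, ENNReal.toReal_pow, ENNReal.toReal_natCast,
      ENNReal.toReal_ofReal (by positivity)] at this
  exact h6.trans (tail_bound n k γ hγ0 hγ1 hγn)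
end

section
/- There are absolute constants c, C > 0 such that the following holds. Let X₁,…,X_n ≥ 0 be independent real random variables with E[X_i] ≤ μ for every i, where μ > 0, let γ ∈ (0,1), and let Y := quant^γ(X₁,…,X_n). Then E[ |Y − 4μ/γ|₊ ] ≤ C·(μ/γ)·2^{−c·γ·n}, where |a|₊ := max(a, 0). -/
/- STATEMENT 15: There are absolute constants c, C > 0 such that: if X₁,…,X_n ≥ 0 are
   independent real random variables with E[X_i] ≤ μ for every i (μ > 0), γ ∈ (0,1), and
   Y := quant^γ(X₁,…,X_n), then E[ |Y − 4μ/γ|₊ ] ≤ C·(μ/γ)·2^{−c·γ·n}. -/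

open MeasureTheory ProbabilityTheory

lemma count_ge {n : ℕ} (u : Fin n → ℝ) (k : ℕ) (hk1 : 1 ≤ k) (hkn : k ≤ n) :
    k ≤ (Finset.univ.filter fun i => kthLargest u k ≤ u i).card := by
  classical
  set l := (List.ofFn u).insertionSort (· ≤ ·) with hl
  have hlen : l.length = n := by simp [hl, List.length_insertionSort]
  have hsorted : l.Pairwise (· ≤ ·) := List.pairwise_insertionSort _ _
  have hidx : n - k < l.length := by omega
  set Y := kthLargest u k with hY
  have hYget : Y = l.get ⟨n - k, hidx⟩ := by
    simp [hY, kthLargest, ← hl, List.getD_eq_getElem?_getD, List.getElem?_eq_getElem hidx,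
      List.get_eq_getElem]
  have hdrop : ∀ x ∈ l.drop (n - k), Y ≤ x := by
    intro x hx
    obtain ⟨j, hj, rfl⟩ := List.getElem_of_mem hx
    rw [List.getElem_drop, hYget]
    have hj' : n - k + j < l.length := by have := List.length_drop ▸ hj; omega
    simpa [List.get_eq_getElem] using
      hsorted.rel_get_of_le (a := ⟨n - k, hidx⟩) (b := ⟨n - k + j, hj'⟩) (by simp)
  have hcountl : k ≤ l.countP (fun x => decide (Y ≤ x)) := by
    have h3 : (l.drop (n-k)).countP (fun x => decide (Y ≤ x)) ≤ l.countP (fun x => decide (Y ≤ x)) := by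
      conv_rhs => rw [← List.take_append_drop (n-k) l]
      rw [List.countP_append]; omega
    have h2 : (l.drop (n-k)).countP (fun x => decide (Y ≤ x)) = (l.drop (n-k)).length := by
      rw [List.countP_eq_length]
      intro a ha; simpa using hdrop a ha
    rw [h2] at h3
    simp only [List.length_drop, hlen] at h3
    omega
  have hperm : l.countP (fun x => decide (Y ≤ x)) = (List.ofFn u).countP (fun x => decide (Y ≤ x)) :=
    ((List.perm_insertionSort _ _)).countP_eq _
  rw [hperm] at hcountl
  have hfin : (List.ofFn u).countP (fun x => decide (Y ≤ x)) = (Finset.univ.filter fun i => Y ≤ u i).card := by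
    have h1 : (Finset.univ.filter fun i => Y ≤ u i).card
        = Multiset.countP (fun i => Y ≤ u i) (Finset.univ.val) := by
      rw [Multiset.countP_eq_card_filter, Finset.card_def, Finset.filter_val]
    rw [h1, Fin.univ_def]
    show _ = Multiset.countP (fun i => Y ≤ u i) (↑(List.finRange n) : Multiset (Fin n))
    rw [Multiset.coe_countP, List.ofFn_eq_map, List.countP_map]
    rfl
  omega

lemma exists_top_set {n : ℕ} (u : Fin n → ℝ) (k : ℕ) (hk1 : 1 ≤ k) (hkn : k ≤ n) :
    ∃ S : Finset (Fin n), S.card = k ∧ ∀ i ∈ S, kthLargest u k ≤ u i := by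
  classical
  obtain ⟨S, hS, hcard⟩ := Finset.exists_subset_card_eq (count_ge u k hk1 hkn)
  exact ⟨S, hcard, fun i hi => (Finset.mem_filter.1 (hS hi)).2⟩

lemma pointwise_bound {n : ℕ} (u : Fin n → ℝ) (hu : ∀ i, 0 ≤ u i) {k : ℕ} (hk1 : 1 ≤ k)
    (hkn : k ≤ n) {a : ℝ} (ha : 0 < a) :
    max (kthLargest u k - a) 0 ≤
      ∑ S ∈ Finset.powersetCard k Finset.univ, (∏ i ∈ S, u i) / a ^ (k - 1) := by
  classical
  have hterm : ∀ S ∈ Finset.powersetCard k Finset.univ, (0:ℝ) ≤ (∏ i ∈ S, u i) / a ^ (k-1) := by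
    intro S _
    exact div_nonneg (Finset.prod_nonneg fun i _ => hu i) (by positivity)
  rcases le_or_gt (kthLargest u k) a with h | h
  · rw [max_eq_right (by linarith)]
    exact Finset.sum_nonneg hterm
  · obtain ⟨S, hScard, hSge⟩ := exists_top_set u k hk1 hkn
    have hSmem : S ∈ Finset.powersetCard k Finset.univ :=
      Finset.mem_powersetCard.2 ⟨Finset.subset_univ S, hScard⟩
    have hY : 0 < kthLargest u k := lt_trans ha h
    set Y := kthLargest u k with hYdef
    have h1 : Y * a^(k-1) ≤ ∏ i ∈ S, u i := by
      calc Y * a^(k-1) ≤ Y * Y^(k-1) :=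
            mul_le_mul_of_nonneg_left (pow_le_pow_left₀ ha.le h.le _) hY.le
        _ = Y^k := by rw [← pow_succ']; congr 1; omega
        _ = ∏ _i ∈ S, Y := by rw [Finset.prod_const, hScard]
        _ ≤ ∏ i ∈ S, u i := Finset.prod_le_prod (fun i _ => hY.le) (fun i hi => hSge i hi)
    have h2 : Y ≤ (∏ i ∈ S, u i) / a^(k-1) := by
      rw [le_div_iff₀ (by positivity)]; exact h1
    have h3 := Finset.single_le_sum hterm hSmem
    rw [max_eq_left (by linarith)]
    linarith

lemma integral_prod_eq {Ω : Type} [MeasurableSpace Ω] (P : Measure Ω) [IsProbabilityMeasure P]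
    {n : ℕ} (X : Fin n → Ω → ℝ) (hmeas : ∀ i, Measurable (X i))
    (hindep : iIndepFun X P) (hint : ∀ i, Integrable (X i) P)
    (S : Finset (Fin n)) :
    Integrable (fun ω => ∏ i ∈ S, X i ω) P ∧
      ∫ ω, ∏ i ∈ S, X i ω ∂P = ∏ i ∈ S, ∫ ω, X i ω ∂P := by
  classical
  induction S using Finset.cons_induction with
  | empty => simp
  | cons i S hi ih =>
    have hfun : ∀ ω, ∏ j ∈ Finset.cons i S hi, X j ω = X i ω * ∏ j ∈ S, X j ω := by
      intro ω; rw [Finset.prod_cons]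
    have hPS : (∏ j ∈ S, X j) = fun ω => ∏ j ∈ S, X j ω := by
      funext ω; simp [Finset.prod_apply]
    have hindepi : IndepFun (fun ω => ∏ j ∈ S, X j ω) (X i) P := by
      rw [← hPS]; exact hindep.indepFun_finsetProd_of_notMem hmeas hi
    have hInt : Integrable (fun ω => X i ω * ∏ j ∈ S, X j ω) P := by
      have := hindepi.symm.integrable_mul (hint i) ih.1
      exact this
    constructor
    · simpa only [hfun] using hInt
    · have := hindepi.symm.integral_mul_eq_mul_integral (hint i).aestronglyMeasurable ih.1.aestronglyMeasurable
      simp only [Pi.mul_apply] at this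
      simp only [hfun, Finset.prod_cons, ← ih.2]
      exact this

lemma sqrt2_bound : Real.sqrt 2 < 1.4143 := by
  rw [Real.sqrt_lt' (by norm_num)]; norm_num

lemma e_div4_le : Real.exp 1 / 4 ≤ (2:ℝ) ^ (-(1/2):ℝ) := by
  have h2 : (2:ℝ) ^ (-(1/2):ℝ) = (Real.sqrt 2)⁻¹ := by
    rw [Real.rpow_neg (by norm_num), Real.sqrt_eq_rpow]
  have hs : (0:ℝ) < Real.sqrt 2 := Real.sqrt_pos.2 (by norm_num)
  rw [h2, div_le_iff₀ (by norm_num), inv_mul_eq_div, le_div_iff₀ hs]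
  nlinarith [sqrt2_bound, Real.exp_one_lt_d9, Real.exp_pos 1, Real.sqrt_nonneg 2]

lemma arith {n k : ℕ} (μ γ : ℝ) (hμ : 0 < μ) (hγ0 : 0 < γ) (hγ1 : γ < 1)
    (hk1 : 1 ≤ k) (hkn : k ≤ n) (hγn : γ * n ≤ k) :
    (n.choose k : ℝ) * (μ^k / (4 * μ / γ) ^ (k-1))
      ≤ 4 * (μ / γ) * 2 ^ (-(1/2 * γ * n)) := by
  set a := 4 * μ / γ with hadef
  have ha : 0 < a := by positivity
  obtain ⟨m, rfl⟩ : ∃ m, k = m + 1 := ⟨k - 1, by omega⟩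
  have hid : μ^(m+1) / a^(m+1-1) = a * (γ/4)^(m+1) := by
    have : γ / 4 = μ / a := by rw [hadef]; field_simp
    rw [this]
    simp only [Nat.add_sub_cancel, div_pow, pow_succ]
    field_simp
  rw [hid]
  have hF : (0:ℝ) < (Nat.factorial (m+1) : ℝ) := by positivity
  have hchoose : (n.choose (m+1) : ℝ) ≤ (Real.exp 1 * n / ((m:ℝ)+1)) ^ (m+1) := by
    have h1 : (n.choose (m+1) : ℝ) ≤ (n:ℝ)^(m+1) / (Nat.factorial (m+1) : ℝ) :=
      Nat.choose_le_pow_div _ _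
    have h1' : (n.choose (m+1) : ℝ) * (Nat.factorial (m+1) : ℝ) ≤ (n:ℝ)^(m+1) :=
      (le_div_iff₀ hF).1 h1
    have h2 : ((m+1:ℕ):ℝ)^(m+1) / (Nat.factorial (m+1) : ℝ) ≤ Real.exp 1 ^ (m+1) := by
      have h := Real.pow_div_factorial_le_exp (x := ((m+1:ℕ):ℝ)) (by positivity) (m+1)
      rwa [show Real.exp ((m+1:ℕ):ℝ) = Real.exp 1 ^ (m+1) by
        rw [← Real.exp_nat_mul]; norm_num] at h
    have h2' : ((m+1:ℕ):ℝ)^(m+1) ≤ Real.exp 1 ^ (m+1) * (Nat.factorial (m+1) : ℝ) :=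
      (div_le_iff₀ hF).1 h2
    rw [div_pow, le_div_iff₀ (by positivity), mul_pow]
    calc (n.choose (m+1) : ℝ) * ((m:ℝ)+1)^(m+1)
        = (n.choose (m+1) : ℝ) * ((m+1:ℕ):ℝ)^(m+1) := by push_cast; ring
      _ ≤ (n.choose (m+1) : ℝ) * (Real.exp 1 ^ (m+1) * (Nat.factorial (m+1) : ℝ)) :=
          mul_le_mul_of_nonneg_left h2' (by positivity)
      _ = Real.exp 1 ^ (m+1) * ((n.choose (m+1) : ℝ) * (Nat.factorial (m+1) : ℝ)) := by ring
      _ ≤ Real.exp 1 ^ (m+1) * (n:ℝ)^(m+1) := mul_le_mul_of_nonneg_left h1' (by positivity)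
  have hstep : (n.choose (m+1) : ℝ) * (γ/4)^(m+1) ≤ (2:ℝ) ^ (-(1/2 * γ * n)) := by
    calc (n.choose (m+1) : ℝ) * (γ/4)^(m+1)
        ≤ (Real.exp 1 * n / ((m:ℝ)+1))^(m+1) * (γ/4)^(m+1) :=
          mul_le_mul_of_nonneg_right hchoose (by positivity)
      _ = (Real.exp 1 * n * γ / (4 * ((m:ℝ)+1)))^(m+1) := by
          rw [← mul_pow, div_mul_div_comm]; ring_nf
      _ ≤ (Real.exp 1 / 4)^(m+1) := by
          apply pow_le_pow_left₀ (by positivity)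
          rw [div_le_div_iff₀ (by positivity) (by norm_num)]
          have hle : γ * (n:ℝ) ≤ (m:ℝ)+1 := by push_cast at hγn ⊢; linarith
          nlinarith [Real.exp_pos 1]
      _ ≤ ((2:ℝ) ^ (-(1/2):ℝ))^(m+1) := pow_le_pow_left₀ (by positivity) e_div4_le _
      _ = (2:ℝ) ^ ((-(1/2):ℝ) * ((m:ℝ)+1)) := by
          rw [← Real.rpow_natCast ((2:ℝ) ^ (-(1/2):ℝ)) (m+1), ← Real.rpow_mul (by norm_num)]
          push_cast; ring_nf
      _ ≤ (2:ℝ) ^ (-(1/2 * γ * n)) := by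
          apply Real.rpow_le_rpow_of_exponent_le (by norm_num)
          have hle : γ * (n:ℝ) ≤ (m:ℝ)+1 := by push_cast at hγn ⊢; linarith
          nlinarith
  calc (n.choose (m+1) : ℝ) * (a * (γ/4)^(m+1))
      = a * ((n.choose (m+1) : ℝ) * (γ/4)^(m+1)) := by ring
    _ ≤ a * (2:ℝ)^(-(1/2 * γ * n)) := mul_le_mul_of_nonneg_left hstep ha.le
    _ = 4 * (μ / γ) * 2 ^ (-(1/2 * γ * n)) := by rw [hadef]; ring

theorem stmt15 :
    ∃ c C : ℝ, 0 < c ∧ 0 < C ∧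
      ∀ (Ω : Type) [MeasurableSpace Ω] (P : Measure Ω) [IsProbabilityMeasure P]
        (n : ℕ) (X : Fin n → Ω → ℝ) (μ γ : ℝ),
        0 < μ → γ ∈ Set.Ioo (0 : ℝ) 1 →
        (∀ i, Measurable (X i)) →
        (∀ i ω, 0 ≤ X i ω) →
        iIndepFun X P →
        (∀ i, Integrable (X i) P) →
        (∀ i, ∫ ω, X i ω ∂P ≤ μ) →
        ∫ ω, max (quant γ (fun i => X i ω) - 4 * μ / γ) 0 ∂P
          ≤ C * (μ / γ) * 2 ^ (-(c * γ * n)) := by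
  classical
  refine ⟨1/2, 4, by norm_num, by norm_num, ?_⟩
  intro Ω _ P _ n X μ γ hμ hγ hmeas hpos hindep hint hEX
  obtain ⟨hγ0, hγ1⟩ := hγ
  have ha : (0:ℝ) < 4 * μ / γ := by positivity
  rcases Nat.eq_zero_or_pos n with hn | hn
  · subst hn
    have hzero : ∀ ω : Ω, max (quant γ (fun i : Fin 0 => X i ω) - 4 * μ / γ) 0 = 0 := by
      intro ω
      have h0 : quant γ (fun i : Fin 0 => X i ω) = 0 := by
        simp [quant, kthLargest]
      rw [h0, max_eq_right (by linarith)]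
    simp only [hzero, integral_zero]
    positivity
  · set k := ⌈γ * (n:ℝ)⌉₊ with hkdef
    have hk1 : 1 ≤ k := Nat.one_le_iff_ne_zero.2 (by
      simp only [hkdef, ne_eq, Nat.ceil_eq_zero, not_le]
      positivity)
    have hγn : γ * (n:ℝ) ≤ k := Nat.le_ceil _
    have hkn : k ≤ n := Nat.ceil_le.2 (by
      have hn0 : (0:ℝ) ≤ (n:ℝ) := Nat.cast_nonneg n
      nlinarith)
    have hquant : ∀ ω, quant γ (fun i => X i ω) = kthLargest (fun i => X i ω) k := by
      intro ω; rfl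
    have key := integral_prod_eq P X hmeas hindep hint
    have hIntS : ∀ S : Finset (Fin n),
        Integrable (fun ω => (∏ i ∈ S, X i ω) / (4*μ/γ) ^ (k-1)) P :=
      fun S => ((key S).1).div_const _
    have hInt : Integrable (fun ω => ∑ S ∈ Finset.powersetCard k Finset.univ,
        (∏ i ∈ S, X i ω) / (4*μ/γ) ^ (k-1)) P :=
      integrable_finset_sum _ (fun S _ => hIntS S)
    have hmono : ∫ ω, max (quant γ (fun i => X i ω) - 4*μ/γ) 0 ∂P
        ≤ ∫ ω, ∑ S ∈ Finset.powersetCard k Finset.univ, (∏ i ∈ S, X i ω) / (4*μ/γ)^(k-1) ∂P := by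
      apply integral_mono_of_nonneg (ae_of_all _ fun ω => le_max_right _ _) hInt
      apply ae_of_all
      intro ω
      show max (quant γ (fun i => X i ω) - 4*μ/γ) 0 ≤ _
      rw [hquant ω]
      exact pointwise_bound (fun i => X i ω) (fun i => hpos i ω) hk1 hkn ha
    rw [integral_finset_sum _ (fun S _ => hIntS S)] at hmono
    have heq : ∀ S ∈ Finset.powersetCard k Finset.univ,
        ∫ ω, (∏ i ∈ S, X i ω) / (4*μ/γ)^(k-1) ∂P
          = (∏ i ∈ S, ∫ ω, X i ω ∂P) / (4*μ/γ)^(k-1) := by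
      intro S _
      rw [integral_div, (key S).2]
    rw [Finset.sum_congr rfl heq] at hmono
    have hsum : ∑ S ∈ Finset.powersetCard k Finset.univ,
        (∏ i ∈ S, ∫ ω, X i ω ∂P) / (4*μ/γ)^(k-1)
        ≤ (n.choose k : ℝ) * (μ^k / (4*μ/γ)^(k-1)) := by
      have hb : ∀ S ∈ Finset.powersetCard k Finset.univ,
          (∏ i ∈ S, ∫ ω, X i ω ∂P) / (4*μ/γ)^(k-1) ≤ μ^k / (4*μ/γ)^(k-1) := by
        intro S hS
        have hcard : S.card = k := (Finset.mem_powersetCard.1 hS).2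
        have hprodle : ∏ i ∈ S, ∫ ω, X i ω ∂P ≤ μ ^ k := by
          rw [← hcard, ← Finset.prod_const]
          exact Finset.prod_le_prod (fun i _ => integral_nonneg (fun ω => hpos i ω))
            (fun i _ => hEX i)
        gcongr
      calc ∑ S ∈ Finset.powersetCard k Finset.univ,
            (∏ i ∈ S, ∫ ω, X i ω ∂P) / (4*μ/γ)^(k-1)
          ≤ (Finset.powersetCard k (Finset.univ : Finset (Fin n))).card
              • (μ^k / (4*μ/γ)^(k-1)) := Finset.sum_le_card_nsmul _ _ _ hb
        _ = (n.choose k : ℝ) * (μ^k / (4*μ/γ)^(k-1)) := by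
            rw [Finset.card_powersetCard, Finset.card_univ, Fintype.card_fin, nsmul_eq_mul]
    have harith := arith (n := n) (k := k) μ γ hμ hγ0 hγ1 hk1 hkn hγn
    calc ∫ ω, max (quant γ (fun i => X i ω) - 4*μ/γ) 0 ∂P
        ≤ ∑ S ∈ Finset.powersetCard k Finset.univ,
            (∏ i ∈ S, ∫ ω, X i ω ∂P) / (4*μ/γ)^(k-1) := hmono
      _ ≤ (n.choose k : ℝ) * (μ^k / (4*μ/γ)^(k-1)) := hsum
      _ ≤ 4 * (μ / γ) * 2 ^ (-(1/2 * γ * n)) := harith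
end
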